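/- Let p₁,…,p_d be nonnegative integers with p_d ≥ 2, α = p₁+⋯+p_{d−1}, and k = ⌊(p_d−2)/(α+1)⌋. If h = (a₁,…,a_{d+1}) ∈ Z^{d+1} with a_d = ±1 satisfies w_h(T_{p₁…p_d}) ≤ k+2, then w_h(T_{p₁…p_d}) = k+2. -/

import Mathlib

open scoped BigOperators

/-- Lattice width of a set `P ⊆ ℝ^d` in direction `h`:
`max_{x∈P} ⟨h,x⟩ − min_{x∈P} ⟨h,x⟩`. -/
noncomputable def width {d : ℕ} (P : Set (Fin d → ℝ)) (h : Fin d → ℝ) : ℝ :=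
  sSup ((fun x => ∑ i, h i * x i) '' P) - sInf ((fun x => ∑ i, h i * x i) '' P)

/-- `l₁(P) = max_{x∈P}(x₁+⋯+x_d) − Σᵢ min_{x∈P} xᵢ`. -/
noncomputable def l1 {d : ℕ} (P : Set (Fin d → ℝ)) : ℝ :=
  sSup ((fun x => ∑ i, x i) '' P) - ∑ i, sInf ((fun x => x i) '' P)

/-- `P` is a lattice polytope: the convex hull of a nonempty finite set of integer points. -/
def IsLatticePolytope {d : ℕ} (P : Set (Fin d → ℝ)) : Prop :=
  ∃ V : Finset (Fin d → ℝ), V.Nonempty ∧ (∀ v ∈ V, ∀ i, ∃ m : ℤ, v i = (m : ℝ)) ∧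
    P = convexHull ℝ (V : Set (Fin d → ℝ))

/-- `P` is a polytope: the convex hull of a nonempty finite set of points. -/
def IsPolytope {d : ℕ} (P : Set (Fin d → ℝ)) : Prop :=
  ∃ V : Finset (Fin d → ℝ), V.Nonempty ∧ P = convexHull ℝ (V : Set (Fin d → ℝ))

/-- The `i`-th standard basis vector of `ℝ^d`. -/
def stdVert (d : ℕ) (i : Fin d) : Fin d → ℝ := fun j => if j = i then 1 else 0

/-- The extra vertex `(p₁, …, pₙ, q, 1) ∈ ℝ^{n+2}`. -/
def Tvert (n : ℕ) (p : Fin n → ℤ) (q : ℤ) : Fin (n + 2) → ℝ :=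
  fun j => if h : (j : ℕ) < n then (p ⟨j, h⟩ : ℝ) else if (j : ℕ) = n then (q : ℝ) else 1

/-- The simplex `T_{p₁…p_{n} q} = conv{e₁,…,e_{n+2}, (p₁,…,pₙ,q,1)} ⊆ ℝ^{n+2}`. -/
noncomputable def Tsimp (n : ℕ) (p : Fin n → ℤ) (q : ℤ) : Set (Fin (n + 2) → ℝ) :=
  convexHull ℝ (insert (Tvert n p q) (Set.range (stdVert (n + 2))))

/- ### Auxiliary machinery -/

noncomputable def dotMap {d : ℕ} (h : Fin d → ℝ) : (Fin d → ℝ) →ₗ[ℝ] ℝ where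
  toFun x := ∑ i, h i * x i
  map_add' x y := by simp [mul_add, Finset.sum_add_distrib]
  map_smul' c x := by simp [Finset.mul_sum, mul_left_comm]

lemma mySSup_convexHull (s : Set ℝ) (hne : s.Nonempty) (hbd : BddAbove s) :
    sSup (convexHull ℝ s) = sSup s := by
  have hsub : convexHull ℝ s ⊆ Set.Iic (sSup s) :=
    convexHull_min (fun y hy => le_csSup hbd hy) (convex_Iic _)
  refine le_antisymm (csSup_le (hne.mono (subset_convexHull ℝ s)) (fun x hx => hsub hx)) ?_
  exact csSup_le_csSup ⟨sSup s, fun x hx => hsub hx⟩ hne (subset_convexHull ℝ s)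

lemma mySInf_convexHull (s : Set ℝ) (hne : s.Nonempty) (hbd : BddBelow s) :
    sInf (convexHull ℝ s) = sInf s := by
  have hsub : convexHull ℝ s ⊆ Set.Ici (sInf s) :=
    convexHull_min (fun y hy => csInf_le hbd hy) (convex_Ici _)
  refine le_antisymm ?_ (le_csInf (hne.mono (subset_convexHull ℝ s)) (fun x hx => hsub hx))
  exact csInf_le_csInf ⟨sInf s, fun x hx => hsub hx⟩ hne (subset_convexHull ℝ s)

lemma mySSup_intCast (T : Finset ℤ) (hT : T.Nonempty) :
    sSup ((fun z : ℤ => (z : ℝ)) '' ↑T) = (T.max' hT : ℝ) := by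
  refine le_antisymm (csSup_le (hT.to_set.image _) ?_) (le_csSup ((T.finite_toSet.image _).bddAbove) ?_)
  · rintro x ⟨z, hz, rfl⟩
    show (z:ℝ) ≤ _; exact_mod_cast T.le_max' z hz
  · exact ⟨_, T.max'_mem hT, rfl⟩

lemma mySInf_intCast (T : Finset ℤ) (hT : T.Nonempty) :
    sInf ((fun z : ℤ => (z : ℝ)) '' ↑T) = (T.min' hT : ℝ) := by
  refine le_antisymm (csInf_le ((T.finite_toSet.image _).bddBelow) ?_) (le_csInf (hT.to_set.image _) ?_)
  · exact ⟨_, T.min'_mem hT, rfl⟩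
  · rintro x ⟨z, hz, rfl⟩
    show _ ≤ (z:ℝ); exact_mod_cast T.min'_le z hz

lemma dot_stdVert (n : ℕ) (a : Fin (n+2) → ℤ) (i : Fin (n+2)) :
    (∑ j, ((a j : ℝ)) * stdVert (n+2) i j) = (a i : ℝ) := by
  simp [stdVert, mul_ite, mul_one, mul_zero, Finset.sum_ite_eq']

lemma dot_Tvert (n : ℕ) (p : Fin n → ℤ) (q : ℤ) (a : Fin (n+2) → ℤ) :
    (∑ j, ((a j : ℝ)) * Tvert n p q j) =
      (((∑ i : Fin n, a (i.castSucc.castSucc) * p i)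
        + a ⟨n, Nat.lt_succ_of_lt (Nat.lt_succ_self n)⟩ * q + a ⟨n+1, by omega⟩ : ℤ) : ℝ) := by
  rw [Fin.sum_univ_castSucc, Fin.sum_univ_castSucc]
  have e1 : ∀ (i : Fin n), Tvert n p q (i.castSucc.castSucc) = (p i : ℝ) := by
    intro i; simp [Tvert, i.isLt]
  have e2 : Tvert n p q ((Fin.last n).castSucc) = (q : ℝ) := by simp [Tvert]
  have e3 : Tvert n p q (Fin.last (n+1)) = 1 := by simp [Tvert]
  have e4 : ((Fin.last n).castSucc : Fin (n+2)) = ⟨n, by omega⟩ := rfl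
  have e5 : (Fin.last (n+1) : Fin (n+2)) = ⟨n+1, by omega⟩ := rfl
  rw [e2, e3, e4, e5]
  push_cast
  rw [Finset.sum_congr rfl (fun i _ => by rw [e1 i])]
  ring

/-- The key integer inequality. -/
lemma key_int (n : ℕ) (p : Fin n → ℤ) (hp : ∀ i, 0 ≤ p i) (q α k : ℤ) (hq : 2 ≤ q)
    (hα : α = ∑ i, p i) (hk : k = (q - 2) / (α + 1)) (b : Fin (n + 2) → ℤ)
    (hb : b ⟨n, Nat.lt_succ_of_lt (Nat.lt_succ_self n)⟩ = 1) (N m M : ℤ)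
    (hN : N = (∑ i : Fin n, b (i.castSucc.castSucc) * p i) + b ⟨n, Nat.lt_succ_of_lt (Nat.lt_succ_self n)⟩ * q
        + b ⟨n+1, by omega⟩)
    (hm : ∀ i, m ≤ b i) (hM : ∀ i, b i ≤ M) (hNM : N ≤ M)
    (hw : M - m ≤ k + 1) : False := by
  have hα0 : 0 ≤ α := hα ▸ Finset.sum_nonneg (fun i _ => hp i)
  have h1 : m * α ≤ ∑ i : Fin n, b (i.castSucc.castSucc) * p i := by
    rw [hα, Finset.mul_sum]
    exact Finset.sum_le_sum (fun i _ => mul_le_mul_of_nonneg_right (hm _) (hp i))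
  have h2 : m ≤ b ⟨n+1, by omega⟩ := hm _
  have h3 : m ≤ 1 := hb ▸ hm ⟨n, by omega⟩
  have h4 : 1 ≤ M := hb ▸ hM ⟨n, by omega⟩
  have hr : 0 ≤ (q - 2) % (α + 1) := Int.emod_nonneg _ (by omega)
  have hdm : q - 2 = (α + 1) * k + (q - 2) % (α + 1) := by
    rw [hk]; exact (Int.mul_ediv_add_emod _ _).symm
  have h5 : m * α + q + m ≤ N := by rw [hN, hb]; linarith
  have h6 : m * α ≤ k + 1 - q := by linarith
  have h7 : α * (m + k) ≤ -1 := by nlinarith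
  have h8 : 0 ≤ m + k := by omega
  nlinarith [mul_nonneg hα0 h8]

/-- if `a_d = ±1` and `w_h(T_{p₁…p_d}) ≤ k+2`, then `w_h(T_{p₁…p_d}) = k+2`.
(Here `n = d−1`, `q = p_d`, and `a_d` is the coordinate of index `n`.) -/
theorem width_eq_of_coord_pm_one (n : ℕ) (p : Fin n → ℤ) (hp : ∀ i, 0 ≤ p i) (q : ℤ)
    (hq : 2 ≤ q) (α k : ℤ) (hα : α = ∑ i, p i) (hk : k = (q - 2) / (α + 1))
    (a : Fin (n + 2) → ℤ) (ha : a ⟨n, by omega⟩ = 1 ∨ a ⟨n, by omega⟩ = -1)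
    (hw : width (Tsimp n p q) (fun i => (a i : ℝ)) ≤ (k : ℝ) + 2) :
    width (Tsimp n p q) (fun i => (a i : ℝ)) = (k : ℝ) + 2 := by
  set N : ℤ := (∑ i : Fin n, a (i.castSucc.castSucc) * p i) + a ⟨n, by omega⟩ * q
      + a ⟨n+1, by omega⟩ with hNdef
  set S : Finset ℤ := insert N (Finset.image a Finset.univ) with hSdef
  have hSne : S.Nonempty := ⟨N, Finset.mem_insert_self _ _⟩
  -- image of the simplex under the dot map
  have himg : (fun x => ∑ i, ((fun i => (a i : ℝ)) i) * x i) '' Tsimp n p q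
      = convexHull ℝ ((fun z : ℤ => (z : ℝ)) '' ↑S) := by
    have h1 : (fun x => ∑ i, ((fun i => (a i : ℝ)) i) * x i)
        = ⇑(dotMap (fun i => (a i : ℝ))) := rfl
    rw [h1, Tsimp, LinearMap.image_convexHull]
    congr 1
    rw [Set.image_insert_eq, ← Set.range_comp]
    have h2 : ⇑(dotMap (fun i => (a i : ℝ))) ∘ stdVert (n+2) = fun i => (a i : ℝ) := by
      funext i; exact dot_stdVert n a i
    have h3 : (dotMap (fun i => (a i : ℝ))) (Tvert n p q) = (N : ℝ) :=
      dot_Tvert n p q a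
    rw [h2, h3, hSdef]
    simp only [Finset.coe_insert, Finset.coe_image, Finset.coe_univ, Set.image_univ,
      Set.image_insert_eq, ← Set.range_comp]
    rfl
  have hsup : sSup ((fun x => ∑ i, ((fun i => (a i : ℝ)) i) * x i) '' Tsimp n p q)
      = (S.max' hSne : ℝ) := by
    rw [himg, mySSup_convexHull _ (hSne.to_set.image _) ((S.finite_toSet.image _).bddAbove),
      mySSup_intCast S hSne]
  have hinf : sInf ((fun x => ∑ i, ((fun i => (a i : ℝ)) i) * x i) '' Tsimp n p q)
      = (S.min' hSne : ℝ) := by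
    rw [himg, mySInf_convexHull _ (hSne.to_set.image _) ((S.finite_toSet.image _).bddBelow),
      mySInf_intCast S hSne]
  have hwidth : width (Tsimp n p q) (fun i => (a i : ℝ))
      = ((S.max' hSne - S.min' hSne : ℤ) : ℝ) := by
    rw [width, hsup, hinf]; push_cast; ring
  set M : ℤ := S.max' hSne
  set m : ℤ := S.min' hSne
  have hMm : M - m ≤ k + 2 := by
    rw [hwidth] at hw; exact_mod_cast hw
  have hNS : N ∈ S := Finset.mem_insert_self _ _
  have haS : ∀ i, a i ∈ S := fun i => Finset.mem_insert_of_mem (Finset.mem_image_of_mem a (Finset.mem_univ i))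
  have hMa : ∀ i, a i ≤ M := fun i => S.le_max' _ (haS i)
  have hma : ∀ i, m ≤ a i := fun i => S.min'_le _ (haS i)
  have hNM : N ≤ M := S.le_max' _ hNS
  have hmN : m ≤ N := S.min'_le _ hNS
  -- the crux: M - m cannot be ≤ k + 1
  have hlow : ¬ (M - m ≤ k + 1) := by
    intro hcon
    rcases ha with h1 | h1
    · exact key_int n p hp q α k hq hα hk a h1 N m M hNdef hma hMa hNM hcon
    · refine key_int n p hp q α k hq hα hk (fun i => -a i) (by show -a ⟨n, by omega⟩ = 1; rw [h1]; ring) (-N) (-M) (-m)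
        ?_ (fun i => neg_le_neg (hMa i)) (fun i => neg_le_neg (hma i))
        (neg_le_neg hmN) (by omega)
      rw [hNdef]
      simp only [neg_mul, Finset.sum_neg_distrib]
      ring
  have : M - m = k + 2 := by omega
  rw [hwidth, this]
  push_cast; ring
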